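/- arXiv:1809.06067 — 2 statements merged into one kernel-verified Lean document; each statement's English description precedes it below -/
import Mathlib

section
/- For the scalar function s ↦ (e^{2st_f} − 1)/(2s) (extended by value t_f at s = 0), the map is strictly increasing in s for each fixed t_f > 0; hence for A symmetric with B = I, λ_max(G(t_f)) = (e^{2λ_n t_f}−1)/(2λ_n) and λ_min(G(t_f)) = (e^{2λ₁ t_f}−1)/(2λ₁) where λ₁ ≤ λ_n are the smallest and largest eigenvalues of A. -/
open Matrix Filter Topology

noncomputable def gram {n m : ℕ} (A : Matrix (Fin n) (Fin n) ℝ) (B : Matrix (Fin n) (Fin m) ℝ)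
    (tf : ℝ) : Matrix (Fin n) (Fin n) ℝ :=
  fun i j => ∫ t in (0:ℝ)..tf,
    (NormedSpace.exp (t • A) * B * Bᵀ * NormedSpace.exp (t • Aᵀ)) i j

/-- `φ(s) = (e^{2 s t_f} − 1)/(2s)`, extended by `t_f` at `s = 0`. -/
noncomputable def phi (tf s : ℝ) : ℝ :=
  if s = 0 then tf else (Real.exp (2 * s * tf) - 1) / (2 * s)

lemma integral_exp_mul (c b : ℝ) (hc : c ≠ 0) :
    ∫ t in (0:ℝ)..b, Real.exp (c * t) = (Real.exp (c * b) - 1) / c := by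
  have h : ∀ t ∈ Set.uIcc (0:ℝ) b, HasDerivAt (fun t => Real.exp (c * t) / c)
      (Real.exp (c * t)) t := by
    intro t _
    have := ((Real.hasDerivAt_exp (c * t)).comp t ((hasDerivAt_id t).const_mul c))
    simpa [mul_comm, mul_div_cancel_left₀ _ hc] using this.div_const c
  rw [intervalIntegral.integral_eq_sub_of_hasDerivAt h
    ((Real.continuous_exp.comp (continuous_const.mul continuous_id)).intervalIntegrable 0 b)]
  simp [sub_div]

lemma phi_eq_integral (tf s : ℝ) : phi tf s = ∫ t in (0:ℝ)..tf, Real.exp (2 * s * t) := by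
  rcases eq_or_ne s 0 with rfl | hs
  · simp [phi]
  · rw [phi, if_neg hs, integral_exp_mul _ _ (by positivity)]

lemma phi_strictMono (tf : ℝ) (htf : 0 < tf) : StrictMono (phi tf) := by
  intro a b hab
  rw [phi_eq_integral, phi_eq_integral]
  apply intervalIntegral.integral_lt_integral_of_continuousOn_of_le_of_exists_lt htf
  · exact (Real.continuous_exp.comp (continuous_const.mul continuous_id)).continuousOn
  · exact (Real.continuous_exp.comp (continuous_const.mul continuous_id)).continuousOn
  · intro x hx
    exact Real.exp_le_exp.2 (by nlinarith [hx.1])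
  · exact ⟨tf, Set.right_mem_Icc.2 htf.le, Real.exp_lt_exp.2 (by nlinarith)⟩

lemma mono_sSup_image {f : ℝ → ℝ} (hf : Monotone f) {S : Set ℝ} (hfin : S.Finite)
    (hne : S.Nonempty) : sSup (f '' S) = f (sSup S) := by
  have hmem : sSup S ∈ S := hne.csSup_mem hfin
  apply le_antisymm
  · refine csSup_le (hne.image f) ?_
    rintro y ⟨x, hx, rfl⟩
    exact hf (le_csSup hfin.bddAbove hx)
  · exact le_csSup (hfin.image f).bddAbove ⟨_, hmem, rfl⟩

lemma mono_sInf_image {f : ℝ → ℝ} (hf : Monotone f) {S : Set ℝ} (hfin : S.Finite)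
    (hne : S.Nonempty) : sInf (f '' S) = f (sInf S) := by
  have hmem : sInf S ∈ S := hne.csInf_mem hfin
  apply le_antisymm
  · exact csInf_le (hfin.image f).bddBelow ⟨_, hmem, rfl⟩
  · refine le_csInf (hne.image f) ?_
    rintro y ⟨x, hx, rfl⟩
    exact hf (csInf_le hfin.bddBelow hx)

lemma gram_eq {n : ℕ} (A : Matrix (Fin n) (Fin n) ℝ) (hA : A.IsHermitian) (tf : ℝ) :
    gram A (1 : Matrix (Fin n) (Fin n) ℝ) tf =
      (hA.eigenvectorUnitary : Matrix (Fin n) (Fin n) ℝ) *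
        diagonal (fun k => phi tf (hA.eigenvalues k)) *
        star (hA.eigenvectorUnitary : Matrix (Fin n) (Fin n) ℝ) := by
  set U : Matrix (Fin n) (Fin n) ℝ := (hA.eigenvectorUnitary : Matrix (Fin n) (Fin n) ℝ) with hU
  set lam := hA.eigenvalues
  have hU1 : star U * U = 1 := Matrix.mem_unitaryGroup_iff'.mp hA.eigenvectorUnitary.2
  have hUinv : U⁻¹ = star U := Matrix.inv_eq_left_inv hU1
  have hU2 : U * star U = 1 := Matrix.mem_unitaryGroup_iff.mp hA.eigenvectorUnitary.2
  have hUunit : IsUnit U := ⟨⟨U, star U, hU2, hU1⟩, rfl⟩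
  have hspec : A = U * diagonal lam * star U := by
    have := hA.spectral_theorem
    simpa using this
  have hAt : Aᵀ = A := by
    ext i j
    rw [transpose_apply]
    conv_lhs => rw [← hA.eq]
    simp [conjTranspose_apply]
  have hexp : ∀ t : ℝ, NormedSpace.exp (t • A) =
      U * diagonal (fun k => Real.exp (t * lam k)) * star U := by
    intro t
    have h1 : t • A = U * diagonal (t • lam) * U⁻¹ := by
      rw [hUinv, hspec, diagonal_smul, mul_smul_comm, smul_mul_assoc]
    rw [h1, Matrix.exp_conj _ _ hUunit, Matrix.exp_diagonal, hUinv]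
    congr 2
    funext k
    simp [Pi.exp_def, ← Real.exp_eq_exp_ℝ]
  have hcancel : ∀ X : Matrix (Fin n) (Fin n) ℝ, star U * (U * X) = X := fun X => by
    rw [← mul_assoc, hU1, one_mul]
  have hprod : ∀ t : ℝ, NormedSpace.exp (t • A) * NormedSpace.exp (t • A) =
      U * diagonal (fun k => Real.exp (2 * lam k * t)) * star U := by
    intro t
    rw [hexp t]
    simp only [mul_assoc]
    rw [hcancel, ← mul_assoc (diagonal _), diagonal_mul_diagonal,
      show (fun i => Real.exp (t * lam i) * Real.exp (t * lam i)) =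
        (fun k => Real.exp (2 * (lam k * t))) from funext fun k => by
          rw [← Real.exp_add]; congr 1; ring]
  have entry : ∀ (w : Fin n → ℝ) (i j : Fin n),
      (U * diagonal w * star U) i j = ∑ k, U i k * w k * U j k := by
    intro w i j
    rw [Matrix.mul_apply]
    refine Finset.sum_congr rfl fun k _ => ?_
    rw [Matrix.mul_diagonal, Matrix.star_apply]
    simp
  ext i j
  show (∫ t in (0:ℝ)..tf, _) = _
  have hint : ∀ t : ℝ,
      (NormedSpace.exp (t • A) * (1 : Matrix (Fin n) (Fin n) ℝ) *
        (1 : Matrix (Fin n) (Fin n) ℝ)ᵀ * NormedSpace.exp (t • Aᵀ)) i j =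
      ∑ k, U i k * Real.exp (2 * lam k * t) * U j k := by
    intro t
    rw [transpose_one, mul_one, mul_one, hAt, hprod t, entry]
  simp only [hint]
  rw [intervalIntegral.integral_finset_sum]
  · rw [entry]
    refine Finset.sum_congr rfl fun k _ => ?_
    rw [intervalIntegral.integral_mul_const, intervalIntegral.integral_const_mul,
      ← phi_eq_integral]
  · intro k _
    exact Continuous.intervalIntegrable (by fun_prop) 0 tf


theorem phi_strictMono_and_extreme_eigs {n : ℕ} [NeZero n] (tf : ℝ) (htf : 0 < tf)
    (A : Matrix (Fin n) (Fin n) ℝ) (hA : A.IsHermitian) :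
    StrictMono (phi tf) ∧
      sSup (spectrum ℝ (gram A (1 : Matrix (Fin n) (Fin n) ℝ) tf)) =
        phi tf (sSup (spectrum ℝ A)) ∧
      sInf (spectrum ℝ (gram A (1 : Matrix (Fin n) (Fin n) ℝ) tf)) =
        phi tf (sInf (spectrum ℝ A)) := by
  have hmono := phi_strictMono tf htf
  set U : Matrix (Fin n) (Fin n) ℝ := (hA.eigenvectorUnitary : Matrix (Fin n) (Fin n) ℝ) with hU
  set lam := hA.eigenvalues with hlam
  have hU1 : star U * U = 1 := Matrix.mem_unitaryGroup_iff'.mp hA.eigenvectorUnitary.2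
  have hU2 : U * star U = 1 := Matrix.mem_unitaryGroup_iff.mp hA.eigenvectorUnitary.2
  let v : (Matrix (Fin n) (Fin n) ℝ)ˣ := ⟨U, star U, hU2, hU1⟩
  have hstar : star U = (↑v⁻¹ : Matrix (Fin n) (Fin n) ℝ) := rfl
  have hvcoe : U = (↑v : Matrix (Fin n) (Fin n) ℝ) := rfl
  have hconj : ∀ w : Fin n → ℝ,
      spectrum ℝ (U * diagonal w * star U) = Set.range w := by
    intro w
    rw [hstar, hvcoe, spectrum.units_conjugate, spectrum_diagonal]
  have hsA : spectrum ℝ A = Set.range lam := by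
    have hspec : A = U * diagonal lam * star U := by
      have := hA.spectral_theorem
      simpa using this
    rw [hspec, hconj]
  have hsG : spectrum ℝ (gram A (1 : Matrix (Fin n) (Fin n) ℝ) tf) =
      phi tf '' Set.range lam := by
    rw [gram_eq A hA tf, hconj]
    exact Set.range_comp (phi tf) lam
  have hfin : (Set.range lam).Finite := Set.finite_range lam
  have hne : (Set.range lam).Nonempty := Set.range_nonempty lam
  refine ⟨hmono, ?_, ?_⟩
  · rw [hsG, hsA, mono_sSup_image hmono.monotone hfin hne]
  · rw [hsG, hsA, mono_sInf_image hmono.monotone hfin hne]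
end

section
/- For any n×n real symmetric matrix M with n ≥ 2, the largest eigenvalue satisfies λ_max(M) ≤ √(α/n + √((n−1)/n · (β − α²/n))), where α = trace(M²) and β = trace(M⁴). -/
open Matrix Finset

lemma conj_pow_aux {m : Type*} [Fintype m] [DecidableEq m] (U B : Matrix m m ℝ)
    (h1 : U * star U = 1) (h2 : star U * U = 1) (k : ℕ) :
    (U * B * star U) ^ k = U * B ^ k * star U := by
  induction k with
  | zero => simp [h1]
  | succ k ih =>
    rw [pow_succ, ih, pow_succ]
    calc U * B ^ k * star U * (U * B * star U)
        = U * B ^ k * (star U * U) * (B * star U) := by simp only [mul_assoc]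
      _ = U * (B ^ k * B) * star U := by rw [h2]; simp only [mul_one, mul_assoc]

lemma trace_pow_eq {n : ℕ} (M : Matrix (Fin n) (Fin n) ℝ) (hM : M.IsHermitian) (k : ℕ) :
    (M ^ k).trace = ∑ i, hM.eigenvalues i ^ k := by
  set U : Matrix (Fin n) (Fin n) ℝ := (hM.eigenvectorUnitary : Matrix (Fin n) (Fin n) ℝ)
  have h1 : U * star U = 1 := (Matrix.mem_unitaryGroup_iff).mp hM.eigenvectorUnitary.2
  have h2 : star U * U = 1 := (Matrix.mem_unitaryGroup_iff').mp hM.eigenvectorUnitary.2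
  conv_lhs => rw [hM.spectral_theorem, Unitary.conjStarAlgAut_apply]
  rw [conj_pow_aux _ _ h1 h2, trace_mul_cycle, h2, one_mul, diagonal_pow,
    trace_diagonal]
  simp

lemma scalar_key {n : ℕ} (hn : 2 ≤ n) (g : Fin n → ℝ) (j : Fin n) :
    g j ≤ (∑ i, g i) / n +
      Real.sqrt (((n : ℝ) - 1) / n * (∑ i, g i ^ 2 - (∑ i, g i) ^ 2 / n)) := by
  have hn0 : (0:ℝ) < n := by positivity
  set S : ℝ := ∑ i, g i with hS
  set Q : ℝ := ∑ i, g i ^ 2 - S ^ 2 / n with hQ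
  set t : ℝ := g j - S / n with ht
  have hsq : ∑ i, (g i - S / n) ^ 2 = Q := by
    have : ∀ i, (g i - S / n) ^ 2 = g i ^ 2 - 2 * (S/n) * g i + (S/n)^2 := by intro i; ring
    rw [Finset.sum_congr rfl fun i _ => this i]
    rw [Finset.sum_add_distrib, Finset.sum_sub_distrib, ← Finset.mul_sum, ← hS,
      Finset.sum_const, Finset.card_univ, Fintype.card_fin, nsmul_eq_mul]
    have h1 : (n:ℝ) * (S / n) ^ 2 = S ^ 2 / n := by
      field_simp
    have h2 : 2 * (S / n) * S = 2 * (S ^ 2 / n) := by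
      field_simp
    rw [h1, h2, hQ]
    ring
  have hsum : ∑ i ∈ Finset.univ.erase j, (g i - S / n) = -t := by
    rw [Finset.sum_erase_eq_sub (Finset.mem_univ j), Finset.sum_sub_distrib, ← hS,
      Finset.sum_const, Finset.card_univ, Fintype.card_fin, nsmul_eq_mul]
    field_simp [ht]
    rw [ht]; field_simp; ring
  have hsq' : ∑ i ∈ Finset.univ.erase j, (g i - S / n) ^ 2 = Q - t ^ 2 := by
    rw [Finset.sum_erase_eq_sub (Finset.mem_univ j), hsq]
  have hcs := sq_sum_le_card_mul_sum_sq (s := Finset.univ.erase j)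
    (f := fun i => g i - S / n)
  rw [hsum, hsq', Finset.card_erase_of_mem (Finset.mem_univ j), Finset.card_univ,
    Fintype.card_fin, neg_pow] at hcs
  have hcard : ((n - 1 : ℕ) : ℝ) = (n : ℝ) - 1 := by
    have : 1 ≤ n := by omega
    push_cast [this]; ring
  rw [hcard] at hcs
  -- from t^2 ≤ (n-1)(Q - t^2) get t^2 ≤ (n-1)/n * Q
  have ht2 : t ^ 2 ≤ ((n : ℝ) - 1) / n * Q := by
    have hn1 : (1:ℝ) ≤ (n:ℝ) := by exact_mod_cast Nat.one_le_of_lt hn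
    rw [div_mul_eq_mul_div, le_div_iff₀ hn0]
    nlinarith [hcs]
  have : t ≤ Real.sqrt (((n : ℝ) - 1) / n * Q) := by
    calc t ≤ |t| := le_abs_self t
      _ = Real.sqrt (t ^ 2) := (Real.sqrt_sq_eq_abs t).symm
      _ ≤ _ := Real.sqrt_le_sqrt ht2
  linarith [this]

theorem eig_max_upper_estimate {n : ℕ} (hn : 2 ≤ n) (M : Matrix (Fin n) (Fin n) ℝ)
    (hM : M.IsHermitian) :
    sSup (spectrum ℝ M) ≤
      Real.sqrt ((M ^ 2).trace / n +
        Real.sqrt (((n : ℝ) - 1) / n * ((M ^ 4).trace - (M ^ 2).trace ^ 2 / n))) := by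
  apply Real.sSup_le _ (Real.sqrt_nonneg _)
  intro x hx
  rw [hM.spectrum_real_eq_range_eigenvalues] at hx
  obtain ⟨j, rfl⟩ := hx
  rw [trace_pow_eq M hM 2, trace_pow_eq M hM 4]
  have key := scalar_key hn (fun i => hM.eigenvalues i ^ 2) j
  have h4 : ∀ i, (hM.eigenvalues i ^ 2) ^ 2 = hM.eigenvalues i ^ 4 := fun i => by ring
  rw [Finset.sum_congr rfl fun i _ => h4 i] at key
  calc hM.eigenvalues j ≤ |hM.eigenvalues j| := le_abs_self _
    _ = Real.sqrt (hM.eigenvalues j ^ 2) := (Real.sqrt_sq_eq_abs _).symm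
    _ ≤ _ := Real.sqrt_le_sqrt key
end
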